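/- Let f : ℝ → ℝ be a differentiable function satisfying f(θ + π) = −f(θ) for all θ ∈ ℝ (so in particular f is 2π-periodic), and suppose every zero of f is nondegenerate: f(θ) = 0 implies f'(θ) ≠ 0. Then the set {θ ∈ [0, 2π) : f(θ) = 0} is finite and its cardinality equals 2 + 4n for some n ∈ ℕ. -/

import Mathlib

open Set Filter Real Topology

section aux
variable (f : ℝ → ℝ)

lemma isolated_zero (hf : Differentiable ℝ f)
    (hreg : ∀ θ : ℝ, f θ = 0 → deriv f θ ≠ 0) {θ : ℝ} (h0 : f θ = 0) :
    ∀ᶠ x in 𝓝[≠] θ, f x ≠ 0 := by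
  have := ((hf θ).hasDerivAt).eventually_ne (c := f θ) (hreg θ h0)
  simpa [h0] using this

lemma finite_zeros (hf : Differentiable ℝ f)
    (hreg : ∀ θ : ℝ, f θ = 0 → deriv f θ ≠ 0) (c d : ℝ) :
    (Icc c d ∩ {θ | f θ = 0}).Finite := by
  by_contra h
  have hinf : (Icc c d ∩ {θ | f θ = 0}).Infinite := h
  obtain ⟨x, _, hx⟩ := hinf.exists_accPt_of_subset_isCompact isCompact_Icc inter_subset_left
  have hev : ∀ᶠ y in 𝓝[≠] x, f y ≠ 0 := by
    by_cases hx0 : f x = 0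
    · exact isolated_zero f hf hreg hx0
    · have : ∀ᶠ y in 𝓝 x, f y ≠ 0 :=
        hf.continuous.continuousAt.eventually_ne hx0
      exact this.filter_mono nhdsWithin_le_nhds
  have hne : (𝓝[≠] x ⊓ 𝓟 (Icc c d ∩ {θ | f θ = 0})).NeBot := hx
  have h1 : ∀ᶠ y in 𝓝[≠] x ⊓ 𝓟 (Icc c d ∩ {θ | f θ = 0}), f y ≠ 0 :=
    hev.filter_mono inf_le_left
  have h2 : ∀ᶠ y in 𝓝[≠] x ⊓ 𝓟 (Icc c d ∩ {θ | f θ = 0}), f y = 0 := by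
    refine eventually_inf_principal.2 (Eventually.of_forall fun y hy => hy.2)
  obtain ⟨y, hy1, hy2⟩ := (h1.and h2).exists
  exact hy1 hy2

lemma exists_zero_of_sign (hf : Differentiable ℝ f) {a b : ℝ} (hab : a < b)
    (hsign : f a * f b < 0) : ∃ x ∈ Ioo a b, f x = 0 := by
  have hc : ContinuousOn f (Icc a b) := hf.continuous.continuousOn
  rcases mul_neg_iff.mp hsign with ⟨ha, hb⟩ | ⟨ha, hb⟩
  · obtain ⟨x, hx, hx0⟩ := intermediate_value_Ioo' hab.le hc (show (0:ℝ) ∈ Ioo (f b) (f a) from ⟨hb, ha⟩)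
    exact ⟨x, hx, hx0⟩
  · obtain ⟨x, hx, hx0⟩ := intermediate_value_Ioo hab.le hc (show (0:ℝ) ∈ Ioo (f a) (f b) from ⟨ha, hb⟩)
    exact ⟨x, hx, hx0⟩

lemma sign_const (hf : Differentiable ℝ f) {a b : ℝ} (hab : a ≤ b)
    (hno : ∀ x ∈ Icc a b, f x ≠ 0) : 0 < f a * f b := by
  rcases eq_or_lt_of_le hab with rfl | hab
  · have h := hno a ⟨le_refl a, le_refl a⟩
    rcases lt_or_gt_of_ne h with h1 | h1
    · nlinarith
    · nlinarith
  · by_contra h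
    push_neg at h
    have hne : f a * f b ≠ 0 :=
      mul_ne_zero (hno a ⟨le_refl a, hab.le⟩) (hno b ⟨hab.le, le_refl b⟩)
    have : f a * f b < 0 := lt_of_le_of_ne h hne
    obtain ⟨x, hx, hx0⟩ := exists_zero_of_sign f hf hab this
    exact hno x ⟨hx.1.le, hx.2.le⟩ hx0

lemma parity (hf : Differentiable ℝ f)
    (hreg : ∀ θ : ℝ, f θ = 0 → deriv f θ ≠ 0) :
    ∀ n : ℕ, ∀ a b : ℝ, a < b → f a ≠ 0 → f b ≠ 0 →
      (Ioo a b ∩ {θ | f θ = 0}).ncard = n → (f a * f b < 0 ↔ Odd n) := by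
  intro n
  induction n with
  | zero =>
    intro a b hab ha hb hcard
    have hfin : (Ioo a b ∩ {θ | f θ = 0}).Finite :=
      (finite_zeros f hf hreg a b).subset (inter_subset_inter_left _ Ioo_subset_Icc_self)
    have hempty : Ioo a b ∩ {θ | f θ = 0} = ∅ := (Set.ncard_eq_zero hfin).mp hcard
    constructor
    · intro hsign
      obtain ⟨x, hx, hx0⟩ := exists_zero_of_sign f hf hab hsign
      exact absurd (show x ∈ Ioo a b ∩ {θ | f θ = 0} from ⟨hx, hx0⟩) (by rw [hempty]; simp)
    · rintro ⟨k, hk⟩; omega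
  | succ n ih =>
    intro a b hab ha hb hcard
    set s : Set ℝ := Ioo a b ∩ {θ | f θ = 0} with hs
    have hfin : s.Finite :=
      (finite_zeros f hf hreg a b).subset (inter_subset_inter_left _ Ioo_subset_Icc_self)
    have hne : s.Nonempty := by
      rw [← Set.ncard_pos hfin] at *; omega
    -- least element
    obtain ⟨θ₀, hθ₀s, hθ₀min⟩ : ∃ a ∈ s, ∀ a' ∈ s, id a' ≤ id a → id a = id a' := by
      obtain ⟨a, ha, h⟩ := hfin.exists_minimalFor id s (by exact hne)
      exact ⟨a, ha, fun a' ha' hle => le_antisymm (h ha' hle) hle⟩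
    have hmin : ∀ y ∈ s, θ₀ ≤ y := fun y hy =>
      le_of_not_gt fun h => absurd (hθ₀min y hy h.le) (by simpa using h.ne')
    have hθ₀ab : θ₀ ∈ Ioo a b := hθ₀s.1
    have hθ₀0 : f θ₀ = 0 := hθ₀s.2
    have hd : deriv f θ₀ ≠ 0 := hreg θ₀ hθ₀0
    -- the "next bound" u
    set s' : Set ℝ := s \ {θ₀} with hs'
    have hfin' : s'.Finite := hfin.diff
    have hcard' : s'.ncard = n := by
      have := Set.ncard_diff_singleton_of_mem hθ₀s
      rw [← hs'] at this; omega
    have hs'lt : ∀ y ∈ s', θ₀ < y := fun y hy =>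
      lt_of_le_of_ne (hmin y hy.1) (Ne.symm hy.2)
    obtain ⟨u, hθ₀u, hub, hu_no⟩ : ∃ u, θ₀ < u ∧ u ≤ b ∧ ∀ y ∈ s', u ≤ y := by
      by_cases h' : s'.Nonempty
      · obtain ⟨u, hus, humin⟩ : ∃ a ∈ s', ∀ a' ∈ s', id a' ≤ id a → id a = id a' := by
          obtain ⟨a, ha, h⟩ := hfin'.exists_minimalFor id s' (by exact h')
          exact ⟨a, ha, fun a' ha' hle => le_antisymm (h ha' hle) hle⟩
        refine ⟨u, hs'lt u hus, hus.1.1.2.le, fun y hy => ?_⟩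
        exact le_of_not_gt fun h => absurd (humin y hy h.le) (by simpa using h.ne')
      · exact ⟨b, hθ₀ab.2, le_refl b, fun y hy => absurd ⟨y, hy⟩ h'⟩
    -- slope sign control near θ₀
    have hslope : Tendsto (slope f θ₀) (𝓝[≠] θ₀) (𝓝 (deriv f θ₀)) :=
      hasDerivAt_iff_tendsto_slope.mp (hf θ₀).hasDerivAt
    have hopen : IsOpen {y : ℝ | 0 < y * deriv f θ₀} := by
      exact isOpen_lt continuous_const (continuous_id.mul continuous_const)
    have hmem : deriv f θ₀ ∈ {y : ℝ | 0 < y * deriv f θ₀} := by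
      simpa using mul_self_pos.mpr hd
    have hev : ∀ᶠ x in 𝓝[≠] θ₀, 0 < slope f θ₀ x * deriv f θ₀ :=
      hslope.eventually (hopen.mem_nhds hmem)
    rw [eventually_nhdsWithin_iff, Metric.eventually_nhds_iff] at hev
    obtain ⟨ε, hε, hball⟩ := hev
    -- pick x₁ ∈ (a, θ₀) and c ∈ (θ₀, u), both within ε of θ₀
    set x₁ : ℝ := max ((a + θ₀) / 2) (θ₀ - ε / 2) with hx₁def
    have hx₁lt : x₁ < θ₀ := max_lt (by linarith [hθ₀ab.1]) (by linarith)
    have hx₁gt : a < x₁ := lt_of_lt_of_le (by linarith [hθ₀ab.1]) (le_max_left _ _)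
    have hx₁d : dist x₁ θ₀ < ε := by
      rw [Real.dist_eq, abs_lt]
      constructor
      · have := le_max_right ((a + θ₀) / 2) (θ₀ - ε / 2); linarith
      · linarith
    set c : ℝ := min ((θ₀ + u) / 2) (θ₀ + ε / 2) with hcdef
    have hcgt : θ₀ < c := lt_min (by linarith) (by linarith)
    have hclt : c < u := lt_of_le_of_lt (min_le_left _ _) (by linarith)
    have hcd : dist c θ₀ < ε := by
      rw [Real.dist_eq, abs_lt]
      constructor
      · linarith
      · have := min_le_right ((θ₀ + u) / 2) (θ₀ + ε / 2); linarith
    have hx₁sign : 0 < slope f θ₀ x₁ * deriv f θ₀ := hball hx₁d (by simpa using hx₁lt.ne)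
    have hcsign : 0 < slope f θ₀ c * deriv f θ₀ := hball hcd (by simpa using hcgt.ne')
    have hslope_x₁ : slope f θ₀ x₁ = f x₁ / (x₁ - θ₀) := by
      rw [slope_def_field, hθ₀0]; ring
    have hslope_c : slope f θ₀ c = f c / (c - θ₀) := by
      rw [slope_def_field, hθ₀0]; ring
    -- f x₁ * deriv < 0, f c * deriv > 0
    have hx₁f : f x₁ * deriv f θ₀ < 0 := by
      rw [hslope_x₁] at hx₁sign
      have h2 : x₁ - θ₀ < 0 := by linarith
      have h3 : f x₁ = (f x₁ / (x₁ - θ₀)) * (x₁ - θ₀) := (div_mul_cancel₀ _ h2.ne).symm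
      rw [h3]
      nlinarith [mul_pos hx₁sign (neg_pos.2 h2)]
    have hcf : 0 < f c * deriv f θ₀ := by
      rw [hslope_c] at hcsign
      have h2 : 0 < c - θ₀ := by linarith
      have h3 : f c = (f c / (c - θ₀)) * (c - θ₀) := (div_mul_cancel₀ _ h2.ne').symm
      rw [h3]
      nlinarith [mul_pos hcsign h2]
    have hfc : f c ≠ 0 := fun h => by rw [h] at hcf; simp at hcf
    have hfx₁ : f x₁ ≠ 0 := fun h => by rw [h] at hx₁f; simp at hx₁f
    -- no zeros on [a, x₁]
    have hax₁ : 0 < f a * f x₁ := by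
      refine sign_const f hf hx₁gt.le fun x hx hx0 => ?_
      rcases eq_or_lt_of_le hx.1 with rfl | hax
      · exact ha hx0
      · have hxs : x ∈ s := ⟨⟨hax, lt_of_le_of_lt hx.2 (hx₁lt.trans hθ₀ab.2)⟩, hx0⟩
        have := hmin x hxs
        linarith [hx.2]
    -- zeros in (c, b) are exactly s'
    have hset : Ioo c b ∩ {θ | f θ = 0} = s' := by
      ext y
      constructor
      · rintro ⟨⟨hy1, hy2⟩, hy0⟩
        refine ⟨⟨⟨?_, hy2⟩, hy0⟩, ?_⟩
        · linarith [hx₁gt, hx₁lt, hcgt]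
        · simp only [mem_singleton_iff]
          intro h; subst h; linarith
      · rintro ⟨⟨⟨hy1, hy2⟩, hy0⟩, hyne⟩
        have := hu_no y ⟨⟨⟨hy1, hy2⟩, hy0⟩, hyne⟩
        exact ⟨⟨lt_of_lt_of_le hclt this, hy2⟩, hy0⟩
    have hcb : c < b := lt_of_lt_of_le hclt hub
    have hih := ih c b hcb hfc hb (by rw [hset]; exact hcard')
    -- combine signs
    have hac : f a * f c < 0 := by nlinarith [hax₁, hx₁f, hcf, sq_nonneg (f x₁), sq_nonneg (deriv f θ₀)]
    constructor
    · intro hsign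
      have hcb_pos : 0 < f c * f b := by nlinarith [sq_nonneg (f a)]
      have : ¬ (f c * f b < 0) := by linarith
      have hnodd : ¬ Odd n := fun h => this (hih.mpr h)
      rw [Nat.odd_add_one]
      simpa using hnodd
    · intro hodd
      rw [Nat.odd_add_one] at hodd
      have hnodd : ¬ Odd n := hodd
      have h1 : ¬ (f c * f b < 0) := fun h => hnodd (hih.mp h)
      have h2 : f c * f b ≠ 0 := mul_ne_zero hfc hb
      have h3 : 0 < f c * f b := lt_of_le_of_ne (le_of_not_gt h1) (Ne.symm h2)
      nlinarith [sq_nonneg (f c)]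


lemma two_pi_periodic (hanti : ∀ θ : ℝ, f (θ + Real.pi) = -f θ) :
    Function.Periodic f (2 * Real.pi) := by
  intro x
  have h : x + 2 * Real.pi = (x + Real.pi) + Real.pi := by ring
  rw [h, hanti, hanti, neg_neg]

end aux

/-- Let `f : ℝ → ℝ` be differentiable with `f(θ + π) = −f(θ)` for all
`θ`, and suppose every zero of `f` is nondegenerate (`f θ = 0 → f' θ ≠ 0`). Then the set
of zeros of `f` in `[0, 2π)` is finite, with cardinality of the form `2 + 4n`. -/
theorem stmt13 (f : ℝ → ℝ) (hf : Differentiable ℝ f)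
    (hanti : ∀ θ : ℝ, f (θ + Real.pi) = -f θ)
    (hreg : ∀ θ : ℝ, f θ = 0 → deriv f θ ≠ 0) :
    ({θ ∈ Set.Ico (0 : ℝ) (2 * Real.pi) | f θ = 0}).Finite ∧
    ∃ n : ℕ, ({θ ∈ Set.Ico (0 : ℝ) (2 * Real.pi) | f θ = 0}).ncard = 2 + 4 * n := by
  set Z : Set ℝ := {θ | f θ = 0} with hZ
  have hgoal : {θ ∈ Set.Ico (0 : ℝ) (2 * Real.pi) | f θ = 0}
      = Set.Ico (0 : ℝ) (2 * Real.pi) ∩ Z := by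
    ext θ; simp [hZ, and_comm]
  have hfinZ : ∀ p q : ℝ, (Ico p q ∩ Z).Finite := fun p q =>
    (finite_zeros f hf hreg p q).subset (inter_subset_inter_left _ Ico_subset_Icc_self)
  have hπ := Real.pi_pos
  refine ⟨by rw [hgoal]; exact hfinZ 0 (2 * Real.pi), ?_⟩
  have hper : Function.Periodic f (2 * Real.pi) := two_pi_periodic f hanti
  -- a point where f is nonzero, inside [0, 2π)
  obtain ⟨a₀, ha₀⟩ : ∃ a, f a ≠ 0 := by
    by_contra h
    push_neg at h
    have hzero : f = fun _ => (0 : ℝ) := funext h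
    exact hreg 0 (h 0) (by rw [hzero]; simp)
  set a : ℝ := toIcoMod Real.two_pi_pos 0 a₀ with hadef
  have hamem : a ∈ Ico (0 : ℝ) (2 * Real.pi) := toIcoMod_mem_Ico' Real.two_pi_pos a₀
  have hfa : f a ≠ 0 := by
    have h1 : a = a₀ - toIcoDiv Real.two_pi_pos 0 a₀ • (2 * Real.pi) := rfl
    rw [h1, hper.sub_zsmul_eq]
    exact ha₀
  -- splitting tool
  have split : ∀ p q r : ℝ, p ≤ q → q ≤ r →
      (Ico p r ∩ Z).ncard = (Ico p q ∩ Z).ncard + (Ico q r ∩ Z).ncard := by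
    intro p q r hpq hqr
    rw [← Ico_union_Ico_eq_Ico hpq hqr, union_inter_distrib_right]
    exact Set.ncard_union_eq
      (Set.Ico_disjoint_Ico_same.mono inter_subset_left inter_subset_left)
      (hfinZ p q) (hfinZ q r)
  -- π-translation
  have hA : Ico (a + Real.pi) (a + 2 * Real.pi) ∩ Z
      = (fun θ => θ + Real.pi) '' (Ico a (a + Real.pi) ∩ Z) := by
    ext θ
    constructor
    · rintro ⟨⟨h1, h2⟩, h0⟩
      refine ⟨θ - Real.pi, ⟨⟨by linarith, by linarith⟩, ?_⟩, by ring⟩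
      have := hanti (θ - Real.pi)
      simp only [sub_add_cancel] at this
      simp only [hZ, mem_setOf_eq] at h0 ⊢
      linarith [this, h0.symm.le, h0.le]
    · rintro ⟨x, ⟨⟨h1, h2⟩, h0⟩, rfl⟩
      simp only [hZ, mem_setOf_eq] at h0
      simp only [hZ, mem_inter_iff, mem_Ico, mem_setOf_eq]
      exact ⟨⟨by linarith, by linarith⟩, by rw [hanti x, h0, neg_zero]⟩
  -- 2π-translation
  have hB : Ico (2 * Real.pi) (a + 2 * Real.pi) ∩ Z
      = (fun θ => θ + 2 * Real.pi) '' (Ico 0 a ∩ Z) := by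
    ext θ
    constructor
    · rintro ⟨⟨h1, h2⟩, h0⟩
      refine ⟨θ - 2 * Real.pi, ⟨⟨by linarith, by linarith⟩, ?_⟩, by ring⟩
      have := hper (θ - 2 * Real.pi)
      simp only [sub_add_cancel] at this
      simp only [hZ, mem_setOf_eq] at h0 ⊢
      rw [← this]; exact h0
    · rintro ⟨x, ⟨⟨h1, h2⟩, h0⟩, rfl⟩
      simp only [hZ, mem_setOf_eq] at h0
      simp only [hZ, mem_inter_iff, mem_Ico, mem_setOf_eq]
      exact ⟨⟨by linarith, by linarith⟩, by rw [hper x]; exact h0⟩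
  have hinj : Function.Injective (fun θ : ℝ => θ + Real.pi) := fun x y h => by
    simpa using h
  have hinj2 : Function.Injective (fun θ : ℝ => θ + 2 * Real.pi) := fun x y h => by
    simpa using h
  -- the half-count
  set k : ℕ := (Ico a (a + Real.pi) ∩ Z).ncard with hk
  have hN1 : (Ico a (a + 2 * Real.pi) ∩ Z).ncard = 2 * k := by
    rw [split a (a + Real.pi) (a + 2 * Real.pi) (by linarith) (by linarith), hA,
      Set.ncard_image_of_injective _ hinj, hk]
    ring
  have hN : (Ico 0 (2 * Real.pi) ∩ Z).ncard = (Ico a (a + 2 * Real.pi) ∩ Z).ncard := by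
    rw [split 0 a (2 * Real.pi) hamem.1 hamem.2.le,
      split a (2 * Real.pi) (a + 2 * Real.pi) hamem.2.le (by linarith [hamem.1]), hB,
      Set.ncard_image_of_injective _ hinj2]
    ring
  -- k is odd
  have hIoo : Ico a (a + Real.pi) ∩ Z = Ioo a (a + Real.pi) ∩ Z := by
    ext θ
    constructor
    · rintro ⟨⟨h1, h2⟩, h0⟩
      rcases eq_or_lt_of_le h1 with rfl | h1'
      · exact absurd h0 hfa
      · exact ⟨⟨h1', h2⟩, h0⟩
    · rintro ⟨⟨h1, h2⟩, h0⟩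
      exact ⟨⟨h1.le, h2⟩, h0⟩
  have hfaπ : f (a + Real.pi) ≠ 0 := by
    rw [hanti a]; exact neg_ne_zero.mpr hfa
  have hsign : f a * f (a + Real.pi) < 0 := by
    rw [hanti a]
    rcases lt_or_gt_of_ne hfa with h | h
    · nlinarith
    · nlinarith
  have hodd : Odd k := by
    have := parity f hf hreg (Ioo a (a + Real.pi) ∩ Z).ncard a (a + Real.pi)
      (by linarith) hfa hfaπ rfl
    rw [hk, hIoo]
    exact this.mp hsign
  obtain ⟨m, hm⟩ := hodd
  refine ⟨m, ?_⟩
  rw [hgoal, hN, hN1, hm]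
  ring
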